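/- Hardware loop counter correctness: for a single-block loop whose bb instruction carries both start and end flags for loop-counter set 1, if lcnt initializes the counter to m ≥ 1, then the block body of n instructions is executed exactly m times, and the final control transfer exits to the instruction following the block. -/

import Mathlib

/-- Loop-counter machine over states `(pc, c)`, for a single-block loop whose
`bb` instruction (at address `bbAddr`) carries both the start and end flag for
loop-counter set 1, with a body of `n` instructions at addresses
`bbAddr + 1, …, bbAddr + n`:
* executing the `bb` instruction (start flag) records `bbAddr` as loop start
  and decrements the counter `c`;
* at the block's end (end flag, address `bbAddr + n`), if `c ≠ 0` then `PC` is
  set back to the loop start `bbAddr`, otherwise the block behaves as a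
  sequential block and `PC` is set to the fall-through address
  `bbAddr + n + 1`;
* all other instructions just advance `PC`. -/
def loopStep (bbAddr n : ℕ) (s : ℕ × ℕ) : ℕ × ℕ :=
  if s.1 = bbAddr then (bbAddr + 1, s.2 - 1)
  else if s.1 = bbAddr + n then
    (if s.2 ≠ 0 then bbAddr else bbAddr + n + 1, s.2)
  else (s.1 + 1, s.2)

lemma loopStep_body (bbAddr n : ℕ) (c : ℕ) :
    ∀ k, 1 ≤ k → k ≤ n → (loopStep bbAddr n)^[k] (bbAddr, c) = (bbAddr + k, c - 1) := by
  intro k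
  induction k with
  | zero => omega
  | succ k ih =>
    intro _ hk
    rcases Nat.eq_zero_or_pos k with hk0 | hk1
    · subst hk0
      simp [loopStep]
    · have h := ih hk1 (by omega)
      rw [Function.iterate_succ_apply', h]
      have h1 : bbAddr + k ≠ bbAddr := by omega
      have h2 : bbAddr + k ≠ bbAddr + n := by omega
      simp only [loopStep, if_neg h1, if_neg h2]
      rfl

lemma loopStep_iter (bbAddr n : ℕ) (hn : 1 ≤ n) (c : ℕ) :
    (loopStep bbAddr n)^[n + 1] (bbAddr, c)
      = (if c - 1 ≠ 0 then bbAddr else bbAddr + n + 1, c - 1) := by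
  rw [Function.iterate_succ_apply', loopStep_body bbAddr n c n hn le_rfl]
  have h1 : bbAddr + n ≠ bbAddr := by omega
  simp only [loopStep, if_neg h1, if_pos rfl, if_true]

lemma loopStep_pc (bbAddr n : ℕ) (hn : 1 ≤ n) (c : ℕ) (j : ℕ) (hj : j < n + 1) :
    ((loopStep bbAddr n)^[j] (bbAddr, c)).1 = bbAddr ↔ j = 0 := by
  rcases Nat.eq_zero_or_pos j with h0 | h1
  · subst h0; simp
  · rw [loopStep_body bbAddr n c j h1 (by omega)]
    simp

/-- Hardware loop counter correctness: for a single-block loop with body of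
`n ≥ 1` instructions, if `lcnt` initialized the counter to `m ≥ 1`, then the
block body is executed exactly `m` times (the loop's `bb` instruction is
executed `m` times), and the final control transfer exits to the instruction
following the block (`bbAddr + n + 1`) with counter `0`. -/
lemma loopStep_filter_one (bbAddr n : ℕ) (hn : 1 ≤ n) (c : ℕ) :
    (Finset.range (n + 1)).filter
        (fun j => ((loopStep bbAddr n)^[j] (bbAddr, c)).1 = bbAddr) = {0} := by
  ext j
  simp only [Finset.mem_filter, Finset.mem_range, Finset.mem_singleton]
  constructor
  · rintro ⟨hj, hp⟩
    exact (loopStep_pc bbAddr n hn c j hj).1 hp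
  · rintro rfl
    exact ⟨by omega, by simp⟩

theorem hardware_loop_counter_correct
    (bbAddr n m : ℕ) (hn : 1 ≤ n) (hm : 1 ≤ m) :
    (loopStep bbAddr n)^[m * (n + 1)] (bbAddr, m) = (bbAddr + n + 1, 0) ∧
    ((Finset.range (m * (n + 1))).filter
        (fun j => ((loopStep bbAddr n)^[j] (bbAddr, m)).1 = bbAddr)).card
      = m := by
  induction m, hm using Nat.le_induction with
  | base =>
    constructor
    · rw [one_mul, loopStep_iter bbAddr n hn 1]
      norm_num
    · rw [one_mul, loopStep_filter_one bbAddr n hn 1]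
      rfl
  | succ m hm ih =>
    have hstep : (loopStep bbAddr n)^[n + 1] (bbAddr, m + 1) = (bbAddr, m) := by
      rw [loopStep_iter bbAddr n hn (m + 1)]
      simp
      omega
    constructor
    · have h : (m + 1) * (n + 1) = m * (n + 1) + (n + 1) := by ring
      rw [h, Function.iterate_add_apply, hstep, ih.1]
    · have hsplit : (m + 1) * (n + 1) = (n + 1) + m * (n + 1) := by ring
      rw [Finset.card_filter, hsplit, Finset.sum_range_add]
      have h1 : ∑ i ∈ Finset.range (n + 1),
          (if ((loopStep bbAddr n)^[i] (bbAddr, m + 1)).1 = bbAddr then 1 else 0) = 1 := by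
        rw [← Finset.card_filter, loopStep_filter_one bbAddr n hn (m + 1)]
        rfl
      have h2 : ∀ i, (loopStep bbAddr n)^[n + 1 + i] (bbAddr, m + 1)
          = (loopStep bbAddr n)^[i] (bbAddr, m) := by
        intro i
        rw [add_comm, Function.iterate_add_apply, hstep]
      have h3 : ∑ i ∈ Finset.range (m * (n + 1)),
          (if ((loopStep bbAddr n)^[n + 1 + i] (bbAddr, m + 1)).1 = bbAddr then 1 else 0) = m := by
        calc ∑ i ∈ Finset.range (m * (n + 1)),
            (if ((loopStep bbAddr n)^[n + 1 + i] (bbAddr, m + 1)).1 = bbAddr then 1 else 0)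
            = ∑ i ∈ Finset.range (m * (n + 1)),
            (if ((loopStep bbAddr n)^[i] (bbAddr, m)).1 = bbAddr then 1 else 0) := by
              apply Finset.sum_congr rfl
              intro i _
              rw [h2 i]
          _ = m := by rw [← Finset.card_filter]; exact ih.2
      rw [h1, h3]
      omega
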